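/- Let {Γ, B} be a balanced 3-valent graph with M({Γ, B}) > 0, let C be a primitive cycle with at least one vertex of finite multiplicity, and let L(C) be the maximal lattice among the lattices of vertices of C. Then the number of vertices v of C with L(v) = L(C) is even. -/

import Mathlib

noncomputable def pdet (u v : ℤ_[2] × ℤ_[2]) : ℤ_[2] := u.1 * v.2 - u.2 * v.1

def PrimVec (u : ℤ_[2] × ℤ_[2]) : Prop := IsUnit u.1 ∨ IsUnit u.2

lemma toZMod_eq_zero {z : ℤ_[2]} : PadicInt.toZMod z = 0 ↔ (2 : ℤ_[2]) ∣ z := by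
  rw [← RingHom.mem_ker, PadicInt.ker_toZMod, PadicInt.maximalIdeal_eq_span_p,
    Ideal.mem_span_singleton]
  norm_num

lemma isUnit_iff_toZMod {z : ℤ_[2]} : IsUnit z ↔ PadicInt.toZMod z ≠ 0 := by
  rw [Ne, toZMod_eq_zero, ← not_not (a := IsUnit z), PadicInt.not_isUnit_iff,
    PadicInt.norm_lt_one_iff_dvd]
  norm_num

lemma det2 : ∀ u v : ZMod 2 × ZMod 2, u ≠ 0 → v ≠ 0 → (u.1 * v.2 - u.2 * v.1 = 0 ↔ u = v) := by
  decide

lemma ker2 : ∀ a b k z : ZMod 2 × ZMod 2, a ≠ 0 → k ≠ 0 →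
    k.1 * a.1 + k.2 * b.1 = 0 → k.1 * a.2 + k.2 * b.2 = 0 →
    z.1 * a.1 + z.2 * b.1 = 0 → z.1 * a.2 + z.2 * b.2 = 0 → z = 0 ∨ z = k := by
  decide

lemma ell_k : ∀ k : ZMod 2 × ZMod 2, k ≠ 0 → (if k.1 = 1 then k.1 else k.2) = 1 := by decide

lemma one_eq_sub : ∀ a b : ZMod 2, a ≠ b → (1 : ZMod 2) = b - a := by decide

lemma span_pair_neg (a b : ℤ_[2] × ℤ_[2]) :
    Submodule.span ℤ_[2] {a, -b} = Submodule.span ℤ_[2] ({a, b} : Set _) := by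
  rw [Submodule.span_insert, Submodule.span_insert,
    show ({-b} : Set (ℤ_[2] × ℤ_[2])) = -{b} from (Set.neg_singleton b).symm, Submodule.span_neg]

open Finset in
lemma cyc_even (n : ℕ) [NeZero n] (h : ZMod n → ZMod 2) :
    Even ((Finset.univ.filter fun i : ZMod n => h i ≠ h (i + 1)).card) := by
  classical
  have hshift : ∑ i : ZMod n, h (i + 1) = ∑ i : ZMod n, h i :=
    Fintype.sum_equiv (Equiv.addRight (1 : ZMod n)) (fun i => h (i + 1)) h (fun i => rfl)
  have hcast : (((Finset.univ.filter fun i : ZMod n => h i ≠ h (i + 1)).card : ℕ) : ZMod 2) = 0 := by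
    rw [Finset.card_filter, Nat.cast_sum]
    have step : ∀ i : ZMod n, ((if h i ≠ h (i + 1) then 1 else 0 : ℕ) : ZMod 2)
        = h (i + 1) - h i := by
      intro i
      by_cases hi : h i = h (i + 1)
      · simp [hi]
      · simp only [hi, if_pos, ne_eq, not_false_eq_true, Nat.cast_one]
        exact one_eq_sub _ _ hi
    rw [Finset.sum_congr rfl fun i _ => step i, Finset.sum_sub_distrib, hshift, sub_self]
  exact (even_iff_two_dvd).2 ((ZMod.natCast_eq_zero_iff _ 2).1 hcast)

open Finset in
open scoped Classical in
theorem stmt14 {V E : Type} [Fintype V] [Fintype E] [DecidableEq V] [DecidableEq E]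
    (rev : E → E) (head : E → V) (B : E → ℤ_[2] × ℤ_[2])
    (hrev : ∀ e, rev (rev e) = e) (hrevne : ∀ e, rev e ≠ e)
    (hcubic : ∀ v : V, (Finset.univ.filter fun e => head e = v).card = 3)
    (hBrev : ∀ e, B (rev e) = - B e)
    (hBsum : ∀ v : V, ∑ e ∈ Finset.univ.filter (fun e => head e = v), B e = 0)
    (m : V → ℕ∞)
    (hm : ∀ (v : V) (e1 e2 : E), e1 ≠ e2 → head e1 = v → head e2 = v →
      m v = emultiplicity (2 : ℤ_[2]) (pdet (B e1) (B e2)))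
    (L : V → Submodule ℤ_[2] (ℤ_[2] × ℤ_[2]))
    (hL : ∀ (v : V) (e1 e2 : E), e1 ≠ e2 → head e1 = v → head e2 = v →
      L v = Submodule.span ℤ_[2] {B e1, B e2})
    (hpos : ∀ v : V, m v ≠ 0)
    (n : ℕ) [NeZero n] (c : ZMod n → E)
    (hcyc : ∀ i : ZMod n, head (rev (c (i + 1))) = head (c i))
    (hcinj : ∀ i j : ZMod n, c i = c j → i = j)
    (hcnr : ∀ i j : ZMod n, c i ≠ rev (c j))
    (hcprim : ∀ i : ZMod n, PrimVec (B (c i)))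
    (hfin : ∃ i : ZMod n, m (head (c i)) ≠ ⊤)
    (LC : Submodule ℤ_[2] (ℤ_[2] × ℤ_[2]))
    (hLCmem : ∃ i : ZMod n, L (head (c i)) = LC)
    (hLCmax : ∀ i : ZMod n, L (head (c i)) ≤ LC) :
    Even ((Finset.univ.filter fun i : ZMod n => L (head (c i)) = LC).card) := by
  set u : ZMod n → ℤ_[2] × ℤ_[2] := fun i => B (c i) with hudef
  -- L and m along the cycle
  have hLi : ∀ i, L (head (c i)) = Submodule.span ℤ_[2] {u i, u (i + 1)} := by
    intro i
    rw [hL (head (c i)) (c i) (rev (c (i + 1))) (hcnr i (i + 1)) rfl (hcyc i), hBrev]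
    exact span_pair_neg _ _
  have hmi : ∀ i, m (head (c i)) = emultiplicity (2 : ℤ_[2]) (pdet (u i) (u (i + 1))) := by
    intro i
    rw [hm (head (c i)) (c i) (rev (c (i + 1))) (hcnr i (i + 1)) rfl (hcyc i), hBrev]
    have hneg : pdet (u i) (-(u (i + 1))) = -(pdet (u i) (u (i + 1))) := by
      simp only [pdet, Prod.fst_neg, Prod.snd_neg]; ring
    rw [show B (c i) = u i from rfl, hneg, emultiplicity_neg]
  have hdvd : ∀ i, (2 : ℤ_[2]) ∣ pdet (u i) (u (i + 1)) := by
    intro i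
    have h := hpos (head (c i))
    rw [hmi i] at h
    by_contra hc
    exact h (emultiplicity_eq_zero.2 hc)
  obtain ⟨i0, hi0⟩ := hfin
  have hd0 : pdet (u i0) (u (i0 + 1)) ≠ 0 := by
    intro h
    rw [hmi i0, h, emultiplicity_zero] at hi0
    exact hi0 rfl
  obtain ⟨iS, hiS⟩ := hLCmem
  set a : ℤ_[2] × ℤ_[2] := u iS with hadef
  set b : ℤ_[2] × ℤ_[2] := u (iS + 1) with hbdef
  have hLC : LC = Submodule.span ℤ_[2] {a, b} := by rw [← hiS, hLi]
  -- coordinates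
  have humem : ∀ i, ∃ xx yy : ℤ_[2], xx • a + yy • b = u i := by
    intro i
    refine Submodule.mem_span_pair.1 ?_
    rw [← hLC]
    refine hLCmax i ?_
    rw [hLi i]
    exact Submodule.subset_span (Set.mem_insert _ _)
  choose x y hxy using humem
  set d : ℤ_[2] := pdet a b with hddef
  have key : ∀ i j, pdet (u i) (u j) = (x i * y j - y i * x j) * d := by
    intro i j
    rw [← hxy i, ← hxy j]
    simp only [pdet, hddef, Prod.fst_add, Prod.snd_add, Prod.smul_fst, Prod.smul_snd,
      smul_eq_mul]
    ring
  have hdne : d ≠ 0 := by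
    intro h
    exact hd0 (by rw [key i0 (i0 + 1), h, mul_zero])
  have hd2 : (2 : ℤ_[2]) ∣ d := hdvd iS
  -- uniqueness of coordinates
  have huniq : ∀ p q : ℤ_[2], p • a + q • b = 0 → p = 0 ∧ q = 0 := by
    intro p q h
    have h1 : p * a.1 + q * b.1 = 0 := by
      have := congrArg Prod.fst h
      simpa [Prod.fst_add, Prod.smul_fst, smul_eq_mul] using this
    have h2 : p * a.2 + q * b.2 = 0 := by
      have := congrArg Prod.snd h
      simpa [Prod.snd_add, Prod.smul_snd, smul_eq_mul] using this
    constructor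
    · have hp : p * d = 0 := by
        rw [hddef]; simp only [pdet]; linear_combination b.2 * h1 - b.1 * h2
      exact (mul_eq_zero.1 hp).resolve_right hdne
    · have hq : q * d = 0 := by
        rw [hddef]; simp only [pdet]; linear_combination a.1 * h2 - a.2 * h1
      exact (mul_eq_zero.1 hq).resolve_right hdne
  set δ : ZMod n → ℤ_[2] := fun i => x i * y (i + 1) - y i * x (i + 1) with hδdef
  -- the criterion
  have hcrit : ∀ i, (L (head (c i)) = LC ↔ IsUnit (δ i)) := by
    intro i
    constructor
    · intro hEq
      have hamem : a ∈ Submodule.span ℤ_[2] ({u i, u (i + 1)} : Set _) := by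
        rw [← hLi i, hEq, hLC]
        exact Submodule.subset_span (Set.mem_insert _ _)
      have hbmem : b ∈ Submodule.span ℤ_[2] ({u i, u (i + 1)} : Set _) := by
        rw [← hLi i, hEq, hLC]
        exact Submodule.subset_span (Set.mem_insert_of_mem _ rfl)
      obtain ⟨p, q, hpq⟩ := Submodule.mem_span_pair.1 hamem
      obtain ⟨r, s, hrs⟩ := Submodule.mem_span_pair.1 hbmem
      rw [← hxy i, ← hxy (i + 1)] at hpq hrs
      have e1 : (p * x i + q * x (i + 1) - 1) • a + (p * y i + q * y (i + 1)) • b = 0 := by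
        have hc1 := congrArg Prod.fst hpq
        have hc2 := congrArg Prod.snd hpq
        simp only [Prod.fst_add, Prod.snd_add, Prod.smul_fst, Prod.smul_snd, smul_eq_mul] at hc1 hc2
        apply Prod.ext <;>
          simp only [Prod.fst_add, Prod.snd_add, Prod.smul_fst, Prod.smul_snd, smul_eq_mul,
            Prod.fst_zero, Prod.snd_zero]
        · linear_combination hc1
        · linear_combination hc2
      have e2 : (r * x i + s * x (i + 1)) • a + (r * y i + s * y (i + 1) - 1) • b = 0 := by
        have hc1 := congrArg Prod.fst hrs
        have hc2 := congrArg Prod.snd hrs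
        simp only [Prod.fst_add, Prod.snd_add, Prod.smul_fst, Prod.smul_snd, smul_eq_mul] at hc1 hc2
        apply Prod.ext <;>
          simp only [Prod.fst_add, Prod.snd_add, Prod.smul_fst, Prod.smul_snd, smul_eq_mul,
            Prod.fst_zero, Prod.snd_zero]
        · linear_combination hc1
        · linear_combination hc2
      obtain ⟨E1, E2⟩ := huniq _ _ e1
      obtain ⟨E3, E4⟩ := huniq _ _ e2
      refine IsUnit.of_mul_eq_one (a := δ i) (p * s - q * r) ?_
      have : δ i * (p * s - q * r)
          = (p * x i + q * x (i + 1)) * (r * y i + s * y (i + 1))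
            - (p * y i + q * y (i + 1)) * (r * x i + s * x (i + 1)) := by
        rw [hδdef]; ring
      rw [this]
      linear_combination (r * y i + s * y (i + 1)) * E1 - (p * y i + q * y (i + 1)) * E3 + E4
    · intro hiu
      refine le_antisymm (hLCmax i) ?_
      rw [hLC, hLi i, Submodule.span_le]
      obtain ⟨w, hw⟩ := hiu.exists_left_inv
      intro z hz
      rcases hz with rfl | hz
      · refine Submodule.mem_span_pair.2 ⟨w * y (i + 1), -(w * y i), ?_⟩
        rw [← hxy i, ← hxy (i + 1)]
        apply Prod.ext
        · simp only [Prod.fst_add, Prod.smul_fst, smul_eq_mul, Prod.fst_neg]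
          linear_combination a.1 * hw
        · simp only [Prod.snd_add, Prod.smul_snd, smul_eq_mul, Prod.snd_neg]
          linear_combination a.2 * hw
      · rw [Set.mem_singleton_iff] at hz
        subst hz
        refine Submodule.mem_span_pair.2 ⟨-(w * x (i + 1)), w * x i, ?_⟩
        rw [← hxy i, ← hxy (i + 1)]
        apply Prod.ext
        · simp only [Prod.fst_add, Prod.smul_fst, smul_eq_mul, Prod.fst_neg]
          linear_combination b.1 * hw
        · simp only [Prod.snd_add, Prod.smul_snd, smul_eq_mul, Prod.snd_neg]
          linear_combination b.2 * hw
  -- mod 2 reduction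
  set φ : ℤ_[2] →+* ZMod 2 := PadicInt.toZMod with hφdef
  set R : ZMod n → ZMod 2 × ZMod 2 := fun i => (φ (u i).1, φ (u i).2) with hRdef
  set P : ZMod n → ZMod 2 × ZMod 2 := fun i => (φ (x i), φ (y i)) with hPdef
  have hRne : ∀ i, R i ≠ 0 := by
    intro i h
    rcases hcprim i with hp | hp
    · exact (isUnit_iff_toZMod.1 hp) (congrArg Prod.fst h)
    · exact (isUnit_iff_toZMod.1 hp) (congrArg Prod.snd h)
  have hRstep : ∀ i, R i = R (i + 1) := by
    intro i
    have h0 : φ (pdet (u i) (u (i + 1))) = 0 := toZMod_eq_zero.2 (hdvd i)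
    have : (R i).1 * (R (i + 1)).2 - (R i).2 * (R (i + 1)).1 = 0 := by
      simpa [pdet, hRdef, map_sub, map_mul] using h0
    exact (det2 _ _ (hRne i) (hRne (i + 1))).1 this
  have hRconst : ∀ i, R i = R iS := by
    have hnat : ∀ (k : ℕ) (i : ZMod n), R (i + (k : ZMod n)) = R i := by
      intro k
      induction k with
      | zero => intro i; simp
      | succ k ih =>
        intro i
        have : i + ((k + 1 : ℕ) : ZMod n) = (i + 1) + (k : ZMod n) := by push_cast; ring
        rw [this, ih (i + 1), ← hRstep i]
    intro i
    have : i = iS + (((i - iS).val : ℕ) : ZMod n) := by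
      rw [ZMod.natCast_zmod_val]; ring
    rw [this, hnat]
  -- solutions of the mod-2 linear system
  set A : ZMod 2 × ZMod 2 := (φ a.1, φ a.2) with hAdef
  set Bb : ZMod 2 × ZMod 2 := (φ b.1, φ b.2) with hBbdef
  have hAne : A ≠ 0 := hRne iS
  have hsol : ∀ i, (P i).1 * A.1 + (P i).2 * Bb.1 = A.1 ∧ (P i).1 * A.2 + (P i).2 * Bb.2 = A.2 := by
    intro i
    have h1 := congrArg (fun z : ℤ_[2] × ℤ_[2] => φ z.1) (hxy i)
    have h2 := congrArg (fun z : ℤ_[2] × ℤ_[2] => φ z.2) (hxy i)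
    simp only [Prod.fst_add, Prod.snd_add, Prod.smul_fst, Prod.smul_snd, smul_eq_mul,
      map_add, map_mul] at h1 h2
    have hRi : R i = A := by rw [hRconst i]
    constructor
    · rw [hPdef, hAdef, hBbdef]
      simp only
      rw [h1]
      exact congrArg Prod.fst hRi
    · rw [hPdef, hAdef, hBbdef]
      simp only
      rw [h2]
      exact congrArg Prod.snd hRi
  have hPne : ∀ i, P i ≠ 0 := by
    intro i h
    apply hAne
    have h1 := (hsol i).1
    have h2 := (hsol i).2
    rw [h] at h1 h2
    simp only [Prod.fst_zero, Prod.snd_zero, zero_mul, add_zero, zero_add] at h1 h2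
    exact Prod.ext h1.symm h2.symm
  have hUnit : ∀ i, (IsUnit (δ i) ↔ P i ≠ P (i + 1)) := by
    intro i
    rw [isUnit_iff_toZMod]
    have hφδ : φ (δ i) = (P i).1 * (P (i + 1)).2 - (P i).2 * (P (i + 1)).1 := by
      simp [hδdef, hPdef, map_sub, map_mul]
    rw [hφδ]
    exact not_congr (det2 _ _ (hPne i) (hPne (i + 1)))
  -- rewrite the filter
  have hfilter : (Finset.univ.filter fun i : ZMod n => L (head (c i)) = LC)
      = Finset.univ.filter fun i : ZMod n => P i ≠ P (i + 1) := by
    apply Finset.filter_congr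
    intro i _
    rw [hcrit i, hUnit i]
  rw [hfilter]
  -- final parity argument
  by_cases hall : ∀ i j : ZMod n, P i = P j
  · have : (Finset.univ.filter fun i : ZMod n => P i ≠ P (i + 1)) = ∅ := by
      apply Finset.filter_eq_empty_iff.2
      intro i _
      exact not_not.2 (hall i (i + 1))
    rw [this]
    simp
  · push_neg at hall
    obtain ⟨i1, j1, hij⟩ := hall
    set k : ZMod 2 × ZMod 2 := P i1 - P j1 with hkdef
    have hk0 : k ≠ 0 := sub_ne_zero.2 hij
    have hkker1 : k.1 * A.1 + k.2 * Bb.1 = 0 := by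
      have := (hsol i1).1
      have h2 := (hsol j1).1
      simp only [hkdef, Prod.fst_sub, Prod.snd_sub]
      linear_combination this - h2
    have hkker2 : k.1 * A.2 + k.2 * Bb.2 = 0 := by
      have := (hsol i1).2
      have h2 := (hsol j1).2
      simp only [hkdef, Prod.fst_sub, Prod.snd_sub]
      linear_combination this - h2
    set ℓ : ZMod 2 × ZMod 2 → ZMod 2 := fun z => if k.1 = 1 then z.1 else z.2 with hℓdef
    have hiff : ∀ i : ZMod n, (P i ≠ P (i + 1) ↔ ℓ (P i) ≠ ℓ (P (i + 1))) := by
      intro i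
      constructor
      · intro hne heq
        set z : ZMod 2 × ZMod 2 := P i - P (i + 1) with hzdef
        have hz0 : z ≠ 0 := sub_ne_zero.2 hne
        have hzker1 : z.1 * A.1 + z.2 * Bb.1 = 0 := by
          have h1 := (hsol i).1
          have h2 := (hsol (i + 1)).1
          simp only [hzdef, Prod.fst_sub, Prod.snd_sub]
          linear_combination h1 - h2
        have hzker2 : z.1 * A.2 + z.2 * Bb.2 = 0 := by
          have h1 := (hsol i).2
          have h2 := (hsol (i + 1)).2
          simp only [hzdef, Prod.fst_sub, Prod.snd_sub]
          linear_combination h1 - h2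
        have hzk : z = k := by
          rcases ker2 A Bb k z hAne hk0 hkker1 hkker2 hzker1 hzker2 with h | h
          · exact absurd h hz0
          · exact h
        have hℓz : ℓ (P i) - ℓ (P (i + 1)) = 1 := by
          have : ℓ (P i) - ℓ (P (i + 1)) = ℓ z := by
            by_cases hk1 : k.1 = 1 <;>
              simp [hℓdef, hk1, hzdef, Prod.fst_sub, Prod.snd_sub]
          rw [this, hzk]
          exact ell_k k hk0
        rw [heq, sub_self] at hℓz
        exact one_ne_zero hℓz.symm
      · intro hne heq
        exact hne (congrArg ℓ heq)
    have hfilter2 : (Finset.univ.filter fun i : ZMod n => P i ≠ P (i + 1))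
        = Finset.univ.filter fun i : ZMod n => (fun j => ℓ (P j)) i ≠ (fun j => ℓ (P j)) (i + 1) := by
      apply Finset.filter_congr
      intro i _
      simpa using hiff i
    rw [hfilter2]
    exact cyc_even n (fun j => ℓ (P j))
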